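/- For integers a, b, and z = a + √2·b ∈ Z[ω]: gde(z, √2) is even if and only if gde(b, 2) ≥ gde(a, 2), in which case gde(a, 2) = gde(z, √2)/2; and gde(z, √2) is odd if and only if gde(b, 2) < gde(a, 2), in which case gde(b, 2) = (gde(z, √2) − 1)/2. -/

import Mathlib

noncomputable section

open Complex

/-- The eighth root of unity ω = e^{iπ/4}. -/
def omg : ℂ := Complex.exp (Real.pi * Complex.I / 4)

/-- √2 as a complex number. -/
def rt2 : ℂ := (Real.sqrt 2 : ℝ)

/-- Membership in the ring Z[ω] = {a + bω + cω² + dω³ : a,b,c,d ∈ ℤ}. -/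
def Zomega (z : ℂ) : Prop :=
  ∃ a b c d : ℤ, z = a + b * omg + c * omg ^ 2 + d * omg ^ 3

/-- Membership in the ring Z[1/√2, i] = {u/(√2)^n : u ∈ Z[ω], n ∈ ℕ}. -/
def ZRoot2i (z : ℂ) : Prop :=
  ∃ u : ℂ, Zomega u ∧ ∃ n : ℕ, z = u / rt2 ^ n

/-- `b` divides `z` within the ring Z[ω]. -/
def ZDvd (b z : ℂ) : Prop := ∃ q : ℂ, Zomega q ∧ z = b * q

/-- `k` is the greatest dividing exponent of base `b` with respect to `z`:
`b^k` divides `z` in Z[ω], while `b^(k+1)` does not. -/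
def IsGde (b z : ℂ) (k : ℕ) : Prop := ZDvd (b ^ k) z ∧ ¬ ZDvd (b ^ (k + 1)) z

/-- `k` is the smallest denominator exponent of base √2 with respect to `z`:
the smallest integer `k` such that `z·(√2)^k ∈ Z[ω]`. -/
def IsSde (z : ℂ) (k : ℤ) : Prop :=
  Zomega (z * rt2 ^ k) ∧ ∀ j : ℤ, Zomega (z * rt2 ^ j) → k ≤ j

lemma rt2_sq : rt2 ^ 2 = 2 := by
  rw [rt2, ← Complex.ofReal_pow, Real.sq_sqrt (by norm_num : (0:ℝ) ≤ 2)]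
  norm_num

lemma omg_eq : omg = ((Real.sqrt 2 / 2 : ℝ) : ℂ) + ((Real.sqrt 2 / 2 : ℝ) : ℂ) * I := by
  have h : (↑Real.pi * I / 4 : ℂ) = ((Real.pi / 4 : ℝ) : ℂ) * I := by push_cast; ring
  rw [omg, h, Complex.exp_mul_I, ← Complex.ofReal_cos, ← Complex.ofReal_sin,
    Real.cos_pi_div_four, Real.sin_pi_div_four]

lemma hs2 : ((Real.sqrt 2 : ℝ) : ℂ) ^ 2 = 2 := rt2_sq

lemma omg_sq : omg ^ 2 = I := by
  rw [omg_eq]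
  push_cast
  linear_combination ((1+I)^2/4) * hs2 + (1/2) * Complex.I_sq

lemma omg_cube : omg ^ 3 = -((Real.sqrt 2 / 2 : ℝ) : ℂ) + ((Real.sqrt 2 / 2 : ℝ) : ℂ) * I := by
  rw [omg_eq]
  push_cast
  linear_combination (((Real.sqrt 2:ℝ):ℂ)*(1+I)^3/8) * hs2 + (((Real.sqrt 2:ℝ):ℂ)*(3+I)/4) * Complex.I_sq

lemma complex_eq {A B C D : ℝ} (h : (A:ℂ) + B*I = C + D*I) : A = C ∧ B = D := by
  have h1 := congrArg Complex.re h
  have h2 := congrArg Complex.im h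
  simp at h1 h2
  exact ⟨h1, h2⟩

lemma rat_sqrt2 (p q : ℚ) (h : (p:ℝ) + (q:ℝ) * Real.sqrt 2 = 0) : p = 0 ∧ q = 0 := by
  by_cases hq : q = 0
  · subst hq; simp at h; exact ⟨by exact_mod_cast h, rfl⟩
  · exfalso
    apply irrational_sqrt_two
    refine ⟨-p/q, ?_⟩
    have hq' : (q:ℝ) ≠ 0 := by exact_mod_cast hq
    push_cast
    field_simp
    linarith [h]

lemma zomega_int (n m : ℤ) : Zomega ((n:ℂ) + rt2 * m) := by
  refine ⟨n, m, 0, -m, ?_⟩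
  rw [omg_sq, omg_cube, omg_eq, rt2]
  push_cast
  ring

lemma zomega_rat {x y : ℚ} (h : Zomega ((x:ℂ) + rt2 * (y:ℂ))) :
    ∃ n m : ℤ, x = n ∧ y = m := by
  obtain ⟨c0, c1, c2, c3, heq⟩ := h
  rw [omg_sq, omg_cube, omg_eq, rt2] at heq
  push_cast at heq
  have key : (((x:ℝ) + (y:ℝ) * Real.sqrt 2 : ℝ) : ℂ) + ((0:ℝ):ℂ) * I
      = (((c0:ℝ) + ((c1:ℝ) - c3) * (Real.sqrt 2 / 2) : ℝ) : ℂ)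
        + (((c2:ℝ) + ((c1:ℝ) + c3) * (Real.sqrt 2 / 2) : ℝ) : ℂ) * I := by
    push_cast
    linear_combination heq
  obtain ⟨e1, e2⟩ := complex_eq key
  have h2 : (c2:ℚ) = 0 ∧ ((c1:ℚ) + c3)/2 = 0 := by
    apply rat_sqrt2
    push_cast
    linarith [e2]
  have h1 : ((x:ℚ) - c0) = 0 ∧ ((y:ℚ) - ((c1:ℚ) - c3)/2) = 0 := by
    apply rat_sqrt2
    push_cast
    linarith [e1]
  have hc3 : (c3:ℚ) = -c1 := by linarith [h2.2]
  refine ⟨c0, c1, by linarith [h1.1], ?_⟩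
  have := h1.2
  rw [hc3] at this
  linarith [this]

lemma rt2_pow_even (m : ℕ) : rt2 ^ (2*m) = (2:ℂ)^m := by
  rw [pow_mul, rt2_sq]

lemma rt2_pow_odd (m : ℕ) : rt2 ^ (2*m+1) = (2:ℂ)^m * rt2 := by
  rw [pow_succ, rt2_pow_even]

lemma rt2_ne : rt2 ≠ 0 := by
  intro h
  have := rt2_sq
  rw [h] at this
  norm_num at this

lemma zdvd_even (a b : ℤ) (m : ℕ) :
    ZDvd (rt2 ^ (2*m)) ((a:ℂ) + rt2 * b) ↔ (2^m : ℤ) ∣ a ∧ (2^m : ℤ) ∣ b := by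
  constructor
  · rintro ⟨q, hq, heq⟩
    rw [rt2_pow_even] at heq
    have h2 : ((2:ℂ))^m ≠ 0 := pow_ne_zero _ two_ne_zero
    have hxq : ((((a:ℚ)/2^m : ℚ)):ℂ) + rt2 * ((((b:ℚ)/2^m : ℚ)):ℂ) = q := by
      apply mul_left_cancel₀ h2
      rw [← heq]
      push_cast
      field_simp
    rw [← hxq] at hq
    obtain ⟨n, k, hn, hk⟩ := zomega_rat hq
    constructor
    · refine ⟨n, ?_⟩
      have : (a:ℚ) = 2^m * n := by
        field_simp at hn
        linarith [hn]
      exact_mod_cast this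
    · refine ⟨k, ?_⟩
      have : (b:ℚ) = 2^m * k := by
        field_simp at hk
        linarith [hk]
      exact_mod_cast this
  · rintro ⟨⟨a', ha⟩, ⟨b', hb⟩⟩
    refine ⟨(a':ℂ) + rt2 * b', zomega_int a' b', ?_⟩
    rw [rt2_pow_even]
    push_cast [ha, hb]
    ring

lemma zdvd_odd (a b : ℤ) (m : ℕ) :
    ZDvd (rt2 ^ (2*m+1)) ((a:ℂ) + rt2 * b) ↔ (2^(m+1) : ℤ) ∣ a ∧ (2^m : ℤ) ∣ b := by
  constructor
  · rintro ⟨q, hq, heq⟩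
    rw [rt2_pow_odd] at heq
    have h2 : ((2:ℂ))^m * rt2 ≠ 0 := mul_ne_zero (pow_ne_zero _ two_ne_zero) rt2_ne
    have hxq : ((((b:ℚ)/2^m : ℚ)):ℂ) + rt2 * ((((a:ℚ)/2^(m+1) : ℚ)):ℂ) = q := by
      apply mul_left_cancel₀ h2
      rw [← heq]
      push_cast
      field_simp
      linear_combination ((a:ℂ) * (2:ℂ)^m) * rt2_sq
    rw [← hxq] at hq
    obtain ⟨n, k, hn, hk⟩ := zomega_rat hq
    constructor
    · refine ⟨k, ?_⟩
      have : (a:ℚ) = 2^(m+1) * k := by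
        field_simp at hk
        linarith [hk]
      exact_mod_cast this
    · refine ⟨n, ?_⟩
      have : (b:ℚ) = 2^m * n := by
        field_simp at hn
        linarith [hn]
      exact_mod_cast this
  · rintro ⟨⟨a', ha⟩, ⟨b', hb⟩⟩
    refine ⟨(b':ℂ) + rt2 * a', zomega_int b' a', ?_⟩
    rw [rt2_pow_odd]
    push_cast [ha, hb]
    linear_combination (-(2:ℂ)^m * a') * rt2_sq

/-- For z = a + √2·b with integers a, b: gde(z, √2) is even iff
gde(b, 2) ≥ gde(a, 2), in which case gde(a, 2) = gde(z, √2)/2; and gde(z, √2)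
is odd iff gde(b, 2) < gde(a, 2), in which case gde(b, 2) = (gde(z, √2) − 1)/2. -/
theorem stmt13 (a b : ℤ) (hab : ¬(a = 0 ∧ b = 0)) (g : ℕ)
    (hg : IsGde rt2 ((a : ℂ) + rt2 * (b : ℂ)) g) :
    (Even g ↔ emultiplicity (2 : ℤ) a ≤ emultiplicity (2 : ℤ) b) ∧
    (Even g → emultiplicity (2 : ℤ) a = (g / 2 : ℕ)) ∧
    (¬Even g ↔ emultiplicity (2 : ℤ) b < emultiplicity (2 : ℤ) a) ∧
    (¬Even g → emultiplicity (2 : ℤ) b = ((g - 1) / 2 : ℕ)) := by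
  obtain ⟨hdvd, hnot⟩ := hg
  rcases Nat.even_or_odd g with hpar | hpar
  · -- even case : g = 2*m
    obtain ⟨m, hm⟩ := hpar
    have hg2 : g = 2*m := by omega
    subst hg2
    obtain ⟨ha, hb⟩ := (zdvd_even a b m).mp hdvd
    have hna : ¬ (2^(m+1) : ℤ) ∣ a := by
      intro hcon
      exact hnot ((zdvd_odd a b m).mpr ⟨hcon, hb⟩)
    have hea : emultiplicity (2:ℤ) a = (m : ℕ∞) := emultiplicity_eq_coe.mpr ⟨ha, hna⟩
    have heb : (m : ℕ∞) ≤ emultiplicity (2:ℤ) b := pow_dvd_iff_le_emultiplicity.mp hb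
    have hev : Even (2*m) := ⟨m, by omega⟩
    refine ⟨⟨fun _ => hea ▸ heb, fun _ => hev⟩, fun _ => ?_, ?_, fun h => absurd hev h⟩
    · rw [hea]; congr 1; omega
    · constructor
      · intro h; exact absurd hev h
      · intro hlt
        exact absurd (hea ▸ heb) (not_le.mpr hlt)
  · -- odd case : g = 2*m+1
    obtain ⟨m, hm⟩ := hpar
    subst hm
    obtain ⟨ha, hb⟩ := (zdvd_odd a b m).mp hdvd
    have hnb : ¬ (2^(m+1) : ℤ) ∣ b := by
      intro hcon
      have : ZDvd (rt2 ^ (2*(m+1))) ((a:ℂ) + rt2*b) := (zdvd_even a b (m+1)).mpr ⟨ha, hcon⟩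
      apply hnot
      rw [show 2*m+1+1 = 2*(m+1) by omega]
      exact this
    have heb : emultiplicity (2:ℤ) b = (m : ℕ∞) := emultiplicity_eq_coe.mpr ⟨hb, hnb⟩
    have hea : ((m+1 : ℕ) : ℕ∞) ≤ emultiplicity (2:ℤ) a := pow_dvd_iff_le_emultiplicity.mp ha
    have hlt : emultiplicity (2:ℤ) b < emultiplicity (2:ℤ) a := by
      rw [heb]
      exact lt_of_lt_of_le (by exact_mod_cast Nat.lt_succ_self m) hea
    have hodd : ¬ Even (2*m+1) := by
      intro h
      obtain ⟨k, hk⟩ := h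
      omega
    refine ⟨⟨fun h => absurd h hodd, fun hle => absurd (not_le.mpr hlt) (not_not.mpr hle)⟩,
      fun h => absurd h hodd, ⟨fun _ => hlt, fun _ => hodd⟩, fun _ => ?_⟩
    rw [heb]; congr 1; omega
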